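/- Let L be a symmetric positive semi-definite matrix partitioned as L = [[L_1, L_2],[L_3, L_4]] with corresponding positive-definite diagonal blocks D_1, D_4 of D_L. If no nonzero vector of ker L is supported on the coordinates of the second block, then the spectrum of L_4 D_4^{-1} is contained in (0, Λ] whenever Spec(D_L^{-1/2} L D_L^{-1/2}) ⊂ [0, Λ]; in particular L_4 is invertible. -/

import Mathlib

open Matrix

/-- A symmetric real matrix whose spectrum lies in `[0, Λ]` satisfies `Λ•1 - A` PSD. -/
lemma aux_smul_one_sub_posSemidef {n : Type*} [Fintype n] [DecidableEq n]
    {A : Matrix n n ℝ} (hA : A.IsHermitian) (Λ : ℝ)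
    (h : spectrum ℝ A ⊆ Set.Icc 0 Λ) : (Λ • (1 : Matrix n n ℝ) - A).PosSemidef := by
  have hherm : (Λ • (1 : Matrix n n ℝ) - A).IsHermitian := by
    refine IsHermitian.sub ?_ hA
    rw [Matrix.smul_one_eq_diagonal]
    exact Matrix.isHermitian_diagonal _
  refine hherm.posSemidef_iff_eigenvalues_nonneg.mpr fun i => ?_
  have hmem : hherm.eigenvalues i ∈ spectrum ℝ (Λ • (1 : Matrix n n ℝ) - A) :=
    hherm.eigenvalues_mem_spectrum_real i
  have heq : Λ • (1 : Matrix n n ℝ) - A = algebraMap ℝ (Matrix n n ℝ) Λ - A := by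
    rw [Algebra.algebraMap_eq_smul_one]
  have hmem' : hherm.eigenvalues i ∈ spectrum ℝ (algebraMap ℝ (Matrix n n ℝ) Λ - A) := by
    rw [← heq]; exact hmem
  rw [← spectrum.singleton_sub_eq] at hmem'
  obtain ⟨x, hx, y, hy, hxy⟩ := hmem'
  obtain ⟨hy0, hyΛ⟩ := h hy
  simp only [Set.mem_singleton_iff] at hx
  subst hx
  rw [← hxy]
  simpa using sub_nonneg.mpr hyΛ

/-- Let `L` be a symmetric positive semi-definite matrix partitioned (over the
index type `ι₁ ⊕ ι₂`) into blocks `L₁, L₂, L₃, L₄`, with positive-definite diagonal matrix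
`D_L = diagonal d` and diagonal blocks `D₁, D₄`.  If no nonzero vector of `ker L` is supported
on the second block (i.e. vanishes on all first-block coordinates), then
`Spec(D_L^{-1/2} L D_L^{-1/2}) ⊆ [0,Λ]` implies `Spec(L₄ D₄⁻¹) ⊆ (0,Λ]`; in particular `L₄`
is invertible. -/
theorem stmt_18 {ι₁ ι₂ : Type*} [Fintype ι₁] [Fintype ι₂] [DecidableEq ι₁] [DecidableEq ι₂]
    (L : Matrix (ι₁ ⊕ ι₂) (ι₁ ⊕ ι₂) ℝ) (hL : L.PosSemidef)
    (d : ι₁ ⊕ ι₂ → ℝ) (hd : ∀ i, 0 < d i)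
    (Λ : ℝ)
    (hspec : spectrum ℝ
        (Matrix.diagonal (fun i => (Real.sqrt (d i))⁻¹) * L *
          Matrix.diagonal (fun i => (Real.sqrt (d i))⁻¹)) ⊆ Set.Icc 0 Λ)
    (hker : ∀ v : (ι₁ ⊕ ι₂) → ℝ, L.mulVec v = 0 → (∀ i : ι₁, v (Sum.inl i) = 0) → v = 0) :
    spectrum ℝ
        (L.submatrix Sum.inr Sum.inr *
          Matrix.diagonal (fun i : ι₂ => (d (Sum.inr i))⁻¹)) ⊆ Set.Ioc 0 Λ ∧
    IsUnit (L.submatrix Sum.inr Sum.inr) := by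
  set f : ι₁ ⊕ ι₂ → ℝ := fun i => (Real.sqrt (d i))⁻¹ with hf
  have hsqrt_pos : ∀ i, 0 < Real.sqrt (d i) := fun i => Real.sqrt_pos.mpr (hd i)
  have hf_pos : ∀ i, 0 < f i := fun i => inv_pos.mpr (hsqrt_pos i)
  set M : Matrix (ι₁ ⊕ ι₂) (ι₁ ⊕ ι₂) ℝ :=
    Matrix.diagonal f * L * Matrix.diagonal f with hM
  set L₄ : Matrix ι₂ ι₂ ℝ := L.submatrix Sum.inr Sum.inr with hL₄
  -- M is PSD
  have hMpsd : M.PosSemidef := by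
    have := hL.conjTranspose_mul_mul_same (Matrix.diagonal f)
    simpa [Matrix.diagonal_conjTranspose, hM] using this
  -- L₄ is positive definite
  have hL₄psd : L₄.PosSemidef := hL.submatrix Sum.inr
  have hL₄pd : L₄.PosDef := by
    refine .of_dotProduct_mulVec_pos hL₄psd.isHermitian fun ⦃x⦄ hx => ?_
    rcases lt_or_eq_of_le (hL₄psd.dotProduct_mulVec_nonneg x) with h | h
    · exact h
    exfalso
    have hzero : L₄ *ᵥ x = 0 := (hL₄psd.dotProduct_mulVec_zero_iff x).mp h.symm
    set v : ι₁ ⊕ ι₂ → ℝ := Sum.elim 0 x with hv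
    have hLv : star v ⬝ᵥ L *ᵥ v = star x ⬝ᵥ L₄ *ᵥ x := by
      simp [dotProduct, mulVec, Fintype.sum_sum_type, hv, hL₄, Matrix.submatrix_apply]
    have hLv0 : L *ᵥ v = 0 := by
      refine (hL.dotProduct_mulVec_zero_iff v).mp ?_
      rw [hLv, hzero]
      simp
    have hv0 := hker v hLv0 (fun i => by simp [hv])
    apply hx
    funext j
    have := congrFun hv0 (Sum.inr j)
    simpa [hv] using this
  -- S := inr-inr submatrix of M equals diagonal f₂ * L₄ * diagonal f₂
  set f₂ : ι₂ → ℝ := fun i => f (Sum.inr i) with hf₂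
  set S : Matrix ι₂ ι₂ ℝ := M.submatrix Sum.inr Sum.inr with hS
  have hSeq : S = Matrix.diagonal f₂ * L₄ * Matrix.diagonal f₂ := by
    ext i j
    simp [hS, hM, hL₄, hf₂, Matrix.submatrix_apply, Matrix.mul_apply, Matrix.diagonal_apply,
      Finset.sum_ite_eq, Finset.sum_ite_eq']
  -- S is positive definite
  have hSpd : S.PosDef := by
    rw [hSeq]
    refine .of_dotProduct_mulVec_pos ?_ ?_
    · have hD : (Matrix.diagonal f₂)ᴴ = Matrix.diagonal f₂ := by
        simp [Matrix.diagonal_conjTranspose]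
      show _ᴴ = _
      rw [Matrix.conjTranspose_mul, Matrix.conjTranspose_mul, hD, hL₄pd.isHermitian.eq,
        Matrix.mul_assoc]
    · intro x hx
      have hDx : Matrix.diagonal f₂ *ᵥ x ≠ 0 := by
        intro h0
        apply hx
        funext i
        have := congrFun h0 i
        simp only [Matrix.mulVec_diagonal, Pi.zero_apply] at this
        have hne : f₂ i ≠ 0 := ne_of_gt (hf_pos (Sum.inr i))
        exact (mul_eq_zero.mp this).resolve_left hne
      have hkey : star x ⬝ᵥ (Matrix.diagonal f₂ * L₄ * Matrix.diagonal f₂) *ᵥ x =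
          star (Matrix.diagonal f₂ *ᵥ x) ⬝ᵥ L₄ *ᵥ (Matrix.diagonal f₂ *ᵥ x) := by
        rw [← Matrix.mulVec_mulVec, ← Matrix.mulVec_mulVec, Matrix.dotProduct_mulVec]
        congr 1
        funext i
        simp [Matrix.vecMul_diagonal, Matrix.mulVec_diagonal, mul_comm]
      rw [hkey]
      exact hL₄pd.dotProduct_mulVec_pos hDx
  -- Λ•1 - S is PSD
  have hΛM : (Λ • (1 : Matrix (ι₁ ⊕ ι₂) (ι₁ ⊕ ι₂) ℝ) - M).PosSemidef :=
    aux_smul_one_sub_posSemidef hMpsd.isHermitian Λ hspec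
  have hΛS : (Λ • (1 : Matrix ι₂ ι₂ ℝ) - S).PosSemidef := by
    have hsub : (Λ • (1 : Matrix (ι₁ ⊕ ι₂) (ι₁ ⊕ ι₂) ℝ) - M).submatrix Sum.inr Sum.inr =
        Λ • (1 : Matrix ι₂ ι₂ ℝ) - S := by
      ext i j
      simp [Matrix.submatrix_apply, Matrix.one_apply, hS]
    rw [← hsub]
    exact hΛM.submatrix Sum.inr
  -- spectrum of L₄ * D₄⁻¹ equals spectrum of S
  set g : ι₂ → ℝ := fun i => Real.sqrt (d (Sum.inr i)) with hg
  have hinv1 : Matrix.diagonal g * Matrix.diagonal f₂ = 1 := by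
    have hfe : (fun i => g i * f₂ i) = fun _ : ι₂ => (1 : ℝ) := by
      funext i
      exact mul_inv_cancel₀ (ne_of_gt (hsqrt_pos (Sum.inr i)))
    rw [Matrix.diagonal_mul_diagonal, hfe, Matrix.diagonal_one]
  have hinv2 : Matrix.diagonal f₂ * Matrix.diagonal g = 1 := by
    have hfe : (fun i => f₂ i * g i) = fun _ : ι₂ => (1 : ℝ) := by
      funext i
      exact inv_mul_cancel₀ (ne_of_gt (hsqrt_pos (Sum.inr i)))
    rw [Matrix.diagonal_mul_diagonal, hfe, Matrix.diagonal_one]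
  set u : (Matrix ι₂ ι₂ ℝ)ˣ := ⟨Matrix.diagonal g, Matrix.diagonal f₂, hinv1, hinv2⟩ with hu
  have hconj : (u : Matrix ι₂ ι₂ ℝ) * S * ((u⁻¹ : (Matrix ι₂ ι₂ ℝ)ˣ) : Matrix ι₂ ι₂ ℝ) =
      L₄ * Matrix.diagonal (fun i : ι₂ => (d (Sum.inr i))⁻¹) := by
    show Matrix.diagonal g * S * Matrix.diagonal f₂ = _
    rw [hSeq, ← Matrix.mul_assoc, ← Matrix.mul_assoc, hinv1, Matrix.one_mul, Matrix.mul_assoc,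
      Matrix.diagonal_mul_diagonal]
    have hfe : (fun i => f₂ i * f₂ i) = fun i : ι₂ => (d (Sum.inr i))⁻¹ := by
      funext i
      show f₂ i * f₂ i = (d (Sum.inr i))⁻¹
      rw [hf₂]
      simp only [hf]
      rw [← mul_inv, Real.mul_self_sqrt (hd (Sum.inr i)).le]
    rw [hfe]
  have hspecEq : spectrum ℝ (L₄ * Matrix.diagonal (fun i : ι₂ => (d (Sum.inr i))⁻¹)) =
      spectrum ℝ S := by
    rw [← hconj]
    exact spectrum.units_conjugate
  refine ⟨fun μ hμ => ?_, hL₄pd.isUnit⟩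
  rw [hspecEq, spectrum.mem_iff] at hμ
  constructor
  · by_contra hle
    push_neg at hle
    apply hμ
    have hpd : (S + (-μ) • (1 : Matrix ι₂ ι₂ ℝ)).PosDef := by
      refine hSpd.add_posSemidef ?_
      rw [Matrix.smul_one_eq_diagonal]
      exact Matrix.posSemidef_diagonal_iff.mpr fun i => by simpa using neg_nonneg.mpr hle
    have heq : algebraMap ℝ (Matrix ι₂ ι₂ ℝ) μ - S = -(S + (-μ) • (1 : Matrix ι₂ ι₂ ℝ)) := by
      rw [Algebra.algebraMap_eq_smul_one]
      module
    rw [heq]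
    exact hpd.isUnit.neg
  · by_contra hgt
    push_neg at hgt
    apply hμ
    have hpd : ((Λ • (1 : Matrix ι₂ ι₂ ℝ) - S) + (μ - Λ) • (1 : Matrix ι₂ ι₂ ℝ)).PosDef := by
      refine Matrix.PosDef.posSemidef_add hΛS ?_
      rw [Matrix.smul_one_eq_diagonal]
      exact Matrix.PosDef.diagonal fun i => sub_pos.mpr hgt
    have heq : algebraMap ℝ (Matrix ι₂ ι₂ ℝ) μ - S =
        (Λ • (1 : Matrix ι₂ ι₂ ℝ) - S) + (μ - Λ) • (1 : Matrix ι₂ ι₂ ℝ) := by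
      rw [Algebra.algebraMap_eq_smul_one]
      module
    rw [heq]
    exact hpd.isUnit
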